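/- Let K be an undirected connected graph with no loops such that for all vertices a, b, c, d of K, if a → b → c → d is a walk in K then (a,d) is an edge of K. Then K is complete bipartite, i.e., its vertex set splits into two parts B_1, B_2 with (x,y) an edge exactly when x and y lie in different parts. -/

import Mathlib

namespace AssocSpec

/-- Bracketings of products `x₁ x₂ ⋯ xₙ` represented as binary trees whose
leaves, read from left to right, are the variables `x₁, …, xₙ`. -/
inductive BTree : Type
  | leaf : BTree
  | node : BTree → BTree → BTree

namespace BTree

/-- The size of a bracketing: its number of variables (leaves). -/
def size : BTree → ℕ
  | leaf => 1
  | node l r => l.size + r.size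

/-- Evaluate a bracketing in a magma `(A, op)`, the leaves taking the values
`f k, f (k+1), …` from left to right. -/
def evalFrom {A : Type*} (op : A → A → A) : BTree → (ℕ → A) → ℕ → A
  | leaf, f, k => f k
  | node l r, f, k => op (evalFrom op l f k) (evalFrom op r f (k + l.size))

/-- The term operation induced by a bracketing `t` on a magma `(A, op)`;
the `i`-th variable (0-indexed) takes the value `f i`. -/
def termOp {A : Type*} (op : A → A → A) (t : BTree) (f : ℕ → A) : A :=
  evalFrom op t f 0

/-- The depth sequence of the DFS tree `G(t)` of a bracketing `t`: the `i`-th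
entry is the depth of the `i`-th variable (0-indexed) in `G(t)`. -/
def depths : BTree → List ℕ
  | leaf => [0]
  | node l r => l.depths ++ r.depths.map (· + 1)

/-- The depth of the `i`-th variable (0-indexed) in the DFS tree `G(t)`. -/
def depth (t : BTree) (i : ℕ) : ℕ := t.depths.getD i 0

/-- The height of the DFS tree `G(t)`: the maximum depth of a variable. -/
def height (t : BTree) : ℕ := t.depths.foldr max 0

/-- The edges of the DFS tree `G(t)`, the variables being indexed from the
given offset: `(p, c)` is an edge iff `x_p` is the parent of `x_c`. -/
def edgesFrom : BTree → ℕ → List (ℕ × ℕ)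
  | leaf, _ => []
  | node l r, k => (k, k + l.size) :: (l.edgesFrom k ++ r.edgesFrom (k + l.size))

/-- The edges of the DFS tree `G(t)` (variables indexed from `0`). -/
def edges (t : BTree) : List (ℕ × ℕ) := t.edgesFrom 0

end BTree

open Classical in
/-- The operation of the graph algebra of the digraph with vertex set `V` and
edge relation `E`; `none` plays the role of `∞`. -/
noncomputable def gaOp {V : Type*} (E : V → V → Prop) :
    Option V → Option V → Option V
  | some x, some y => if E x y then some x else none
  | _, _ => none

/-- The magma `(A, op)` satisfies the bracketing identity `t ≈ t'`. -/
def Satisfies {A : Type*} (op : A → A → A) (t t' : BTree) : Prop :=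
  ∀ f : ℕ → A, BTree.termOp op t f = BTree.termOp op t' f

/-- The `n`-th member `s_n` of the associative spectrum of the magma `(A, op)`:
the number of distinct term operations induced by bracketings of size `n`. -/
noncomputable def spectrum {A : Type*} (op : A → A → A) (n : ℕ) : ℕ :=
  Set.ncard {g : (ℕ → A) → A | ∃ t : BTree, t.size = n ∧ g = BTree.termOp op t}

/-- Reachability (by a walk) in the digraph with edge relation `E`. -/
def Reach {V : Type*} (E : V → V → Prop) : V → V → Prop :=
  Relation.ReflTransGen E

/-- `u` and `v` lie in the same strongly connected component. -/
def SameSCC {V : Type*} (E : V → V → Prop) (u v : V) : Prop :=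
  Reach E u v ∧ Reach E v u

/-- The strongly connected component of `v`, as a set of vertices. -/
def scc {V : Type*} (E : V → V → Prop) (v : V) : Set V :=
  {u | SameSCC E u v}

/-- `v` lies in a nontrivial strongly connected component (one carrying at
least one edge), i.e. `v` lies on a closed walk of positive length. -/
def InNontrivialSCC {V : Type*} (E : V → V → Prop) (v : V) : Prop :=
  ∃ u, E v u ∧ Reach E u v

/-- The induced subgraph on the set `K` (with the edge relation `E`) is an
`m`-whirl: `K` is partitioned into blocks `B 0, …, B (m-1)` so that edges go
exactly from each block to the cyclically next one. -/
def IsWhirlOn {V : Type*} (E : V → V → Prop) (K : Set V) (m : ℕ) : Prop :=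
  ∃ B : ZMod m → Set V,
    (∀ i, (B i).Nonempty) ∧
    (∀ i, B i ⊆ K) ∧
    (∀ x ∈ K, ∃! i, x ∈ B i) ∧
    (∀ x ∈ K, ∀ y ∈ K, (E x y ↔ ∃ i, x ∈ B i ∧ y ∈ B (i + 1)))

/-- `p 0 → p 1 → ⋯ → p len` is a path (a walk with pairwise distinct
vertices) in the digraph with edge relation `E`. -/
def IsPath {V : Type*} (E : V → V → Prop) (len : ℕ) (p : ℕ → V) : Prop :=
  (∀ i < len, E (p i) (p (i + 1))) ∧
  (∀ i ≤ len, ∀ j ≤ len, p i = p j → i = j)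

/-- The walk `p 0 → ⋯ → p len` is pleasant: all its vertices belong to
trivial strongly connected components. -/
def IsPleasant {V : Type*} (E : V → V → Prop) (len : ℕ) (p : ℕ → V) : Prop :=
  ∀ i ≤ len, ¬ InNontrivialSCC E (p i)

/-- The connected component `K` (of an undirected graph) is complete
bipartite: it splits into two nonempty parts with edges exactly between
vertices of different parts. -/
def IsCompleteBipartiteOn {V : Type*} (E : V → V → Prop) (K : Set V) : Prop :=
  ∃ B1 B2 : Set V, B1.Nonempty ∧ B2.Nonempty ∧ B1 ∪ B2 = K ∧ B1 ∩ B2 = ∅ ∧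
    ∀ x ∈ K, ∀ y ∈ K, (E x y ↔ (x ∈ B1 ∧ y ∈ B2) ∨ (x ∈ B2 ∧ y ∈ B1))

/-- A DFS tree of size `n`: a rooted directed tree on the vertices
`x₁, …, xₙ` (here `Fin n`, the root being `0`), given by its parent function,
such that the parent of every non-root vertex precedes it and the vertex set
of the induced subtree rooted at any vertex `i` is an interval `[i, i']`.
(The parent of the root is, by convention, the root itself.) -/
structure DFSTree (n : ℕ) where
  parent : Fin n → Fin n
  parent_lt : ∀ i : Fin n, 0 < (i : ℕ) → (parent i : ℕ) < (i : ℕ)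
  parent_root : ∀ i : Fin n, (i : ℕ) = 0 → parent i = i
  interval : ∀ i j k : Fin n, i ≤ j → j ≤ k →
    (∃ a : ℕ, parent^[a] k = i) → (∃ a : ℕ, parent^[a] j = i)

/-- The depth of the vertex `i` in a DFS tree: the length of the path from
the root to `i`. -/
noncomputable def DFSTree.depth {n : ℕ} (T : DFSTree n) (i : Fin n) : ℕ :=
  sInf {k : ℕ | (T.parent^[k] i : ℕ) = 0}

/-- The height of a DFS tree: the maximum depth of a vertex. -/
noncomputable def DFSTree.height {n : ℕ} (T : DFSTree n) : ℕ :=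
  Finset.univ.sup fun i => T.depth i

/-- The vertex `i` is a leaf (childless vertex) of the DFS tree `T`. -/
def DFSTree.IsLeaf {n : ℕ} (T : DFSTree n) (i : Fin n) : Prop :=
  ∀ j : Fin n, T.parent j = i → j = i

/-- `t_h(n)`: the number of DFS trees of size `n` of height at most `h`. -/
noncomputable def tcount (h n : ℕ) : ℕ :=
  Nat.card {T : DFSTree n // T.height ≤ h}

/-- `d` is a zag sequence: `d₁ = 0`, `d₂ = 1`, and
`1 ≤ d_{i+1} ≤ d_i + 1` for all `i` (1-indexed as in the paper;
here `d : Fin n → ℕ` is 0-indexed). -/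
def IsZag {n : ℕ} (d : Fin n → ℕ) : Prop :=
  (∀ h : 0 < n, d ⟨0, h⟩ = 0) ∧
  (∀ h : 1 < n, d ⟨1, h⟩ = 1) ∧
  (∀ i : ℕ, ∀ h : i + 1 < n,
    1 ≤ d ⟨i + 1, h⟩ ∧ d ⟨i + 1, h⟩ ≤ d ⟨i, Nat.lt_of_succ_lt h⟩ + 1)

/-- `M(t,t')`: the largest `m` such that the depth sequences of the DFS trees
of the bracketings `t` and `t'` are congruent modulo `m`. -/
noncomputable def Mval (t t' : BTree) : ℕ :=
  sSup {m : ℕ | ∀ i < t.size, t.depth i ≡ t'.depth i [MOD m]}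

end AssocSpec
open AssocSpec in
/-- A connected loopless undirected graph `K` in which
`a → b → c → d` being a walk implies that `(a,d)` is an edge is complete
bipartite. -/
theorem stmt13 {V : Type*} [Nonempty V] (E : V → V → Prop)
    (hsymm : ∀ u v, E u v → E v u)
    (hconn : ∀ u v : V, Reach E u v)
    (hloopless : ∀ v : V, ¬ E v v)
    (hshort : ∀ a b c d : V, E a b → E b c → E c d → E a d) :
    ∃ B1 B2 : Set V, B1 ∪ B2 = Set.univ ∧ B1 ∩ B2 = ∅ ∧
      ∀ x y : V, E x y ↔ (x ∈ B1 ∧ y ∈ B2) ∨ (x ∈ B2 ∧ y ∈ B1) := by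
  classical
  by_cases hedge : ∃ a b : V, E a b
  · obtain ⟨a₀, b₀, hab⟩ := hedge
    -- even-length reachability
    set S : V → V → Prop := fun u v => ∃ w, E u w ∧ E w v with hS
    have hSsymm : Symmetric S := by
      rintro u v ⟨w, h1, h2⟩; exact ⟨w, hsymm _ _ h2, hsymm _ _ h1⟩
    set ER : V → V → Prop := Relation.ReflTransGen S with hER
    have hERsymm : ∀ u v, ER u v → ER v u := by
      intro u v h
      haveI : Std.Symm S := ⟨fun a b hab => hSsymm hab⟩
      exact Std.Symm.symm _ _ h
    -- even walk then edge gives edge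
    have lemA : ∀ x z y : V, ER x z → E z y → E x y := by
      intro x z y h
      induction h using Relation.ReflTransGen.head_induction_on with
      | refl => intro h; exact h
      | head hstep _ ih =>
        intro hzy
        obtain ⟨w, h1, h2⟩ := hstep
        exact hshort _ _ _ _ h1 h2 (ih hzy)
    -- edge then even walk gives edge
    have lemA2 : ∀ x z y : V, E x z → ER z y → E x y := by
      intro x z y hxz h
      induction h with
      | refl => exact hxz
      | tail _ hstep ih =>
        obtain ⟨w, h1, h2⟩ := hstep
        exact hshort _ _ _ _ ih h1 h2
    -- decomposition of reachability
    have lemB : ∀ x y : V, Reach E x y → ER x y ∨ ∃ z, E x z ∧ ER z y := by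
      intro x y h
      induction h using Relation.ReflTransGen.head_induction_on with
      | refl => exact Or.inl Relation.ReflTransGen.refl
      | head hstep _ ih =>
        rename_i a c _
        rcases ih with h' | ⟨z, hz1, hz2⟩
        · exact Or.inr ⟨c, hstep, h'⟩
        · exact Or.inl (Relation.ReflTransGen.head ⟨c, hstep, hz1⟩ hz2)
    have key : ∀ x : V, ¬ E a₀ x → ER a₀ x := by
      intro x hx
      rcases lemB a₀ x (hconn a₀ x) with h | ⟨z, hz1, hz2⟩
      · exact h
      · exact absurd (lemA2 a₀ z x hz1 hz2) hx
    refine ⟨{x | ¬ E a₀ x}, {x | E a₀ x}, ?_, ?_, ?_⟩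
    · ext x; simp [em' (E a₀ x)]
    · ext x; simp
    · intro x y
      constructor
      · intro hxy
        by_cases hx : E a₀ x
        · refine Or.inr ⟨hx, fun hy => ?_⟩
          exact hloopless a₀ (hshort _ _ _ _ hx hxy (hsymm _ _ hy))
        · exact Or.inl ⟨hx, lemA a₀ x y (key x hx) hxy⟩
      · rintro (⟨hx, hy⟩ | ⟨hx, hy⟩)
        · exact lemA x a₀ y (hERsymm _ _ (key x hx)) hy
        · exact lemA2 x a₀ y (hsymm _ _ hx) (key y hy)
  · push_neg at hedge
    refine ⟨Set.univ, ∅, by simp, by simp, fun x y => ?_⟩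
    simp [hedge x y]
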